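/- Let 𝒞, 𝒞', 𝒟 be subcategories of 𝓑 satisfying condition (RCP) with 𝒟 ⊆ 𝒞 ∩ 𝒞'. Then CoCone(𝒟,𝒞) = CoCone(𝒞',𝒟) if and only if 𝒞' = CoCone(𝒟,𝒞) ∩ 𝒟^⊥¹. -/

import Mathlib

open CategoryTheory Category Limits ZeroObject

universe v u

namespace CotorsionPaper

variable {B : Type u} [Category.{v} B] [Abelian B]

/-- `f, g` form a short exact sequence `0 → X → Y → Z → 0`. -/
def IsSES {X Y Z : B} (f : X ⟶ Y) (g : Y ⟶ Z) : Prop :=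
  ∃ w : f ≫ g = 0, (ShortComplex.mk f g w).ShortExact

/-- `Ext¹(X, Y) = 0`: every short exact sequence `0 → Y → E → X → 0` splits. -/
def Ext1Zero (X Y : B) : Prop :=
  ∀ ⦃E : B⦄ (i : Y ⟶ E) (p : E ⟶ X), IsSES i p → ∃ s : X ⟶ E, s ≫ p = 𝟙 X

/-- `Ext²(X, Y) = 0`, via dimension shifting: `Ext¹(K, Y) = 0` for any syzygy `K` of `X`. -/
def Ext2Zero (X Y : B) : Prop :=
  ∀ ⦃K P : B⦄ (i : K ⟶ P) (p : P ⟶ X), Projective P → IsSES i p → Ext1Zero K Y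

/-- A (strictly) full additive subcategory: closed under isomorphisms,
contains a zero object and is closed under finite direct sums. -/
structure AddSubcat (S : Set B) : Prop where
  zero_mem : (0 : B) ∈ S
  iso_closed : ∀ ⦃X Y : B⦄, (X ≅ Y) → X ∈ S → Y ∈ S
  sum_closed : ∀ ⦃X Y : B⦄, X ∈ S → Y ∈ S → (X ⊞ Y) ∈ S

/-- `S` is closed under direct summands (retracts). -/
def ClosedUnderSummands (S : Set B) : Prop :=
  ∀ ⦃X Y : B⦄ (r : X ⟶ Y) (s : Y ⟶ X), s ≫ r = 𝟙 Y → X ∈ S → Y ∈ S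

/-- `S` is rigid: `Ext¹(X, Y) = 0` for all `X, Y ∈ S`. -/
def Rigid (S : Set B) : Prop :=
  ∀ ⦃X⦄, X ∈ S → ∀ ⦃Y⦄, Y ∈ S → Ext1Zero X Y

/-- `S^⊥¹`. -/
def rightPerp (S : Set B) : Set B := {Y | ∀ ⦃X⦄, X ∈ S → Ext1Zero X Y}

/-- `^⊥¹S`. -/
def leftPerp (S : Set B) : Set B := {X | ∀ ⦃Y⦄, Y ∈ S → Ext1Zero X Y}

/-- `f : X ⟶ A` is a right `S`-approximation of `A`. -/
def IsRightApprox (S : Set B) {X A : B} (f : X ⟶ A) : Prop :=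
  X ∈ S ∧ ∀ ⦃X' : B⦄, X' ∈ S → ∀ g : X' ⟶ A, ∃ h : X' ⟶ X, h ≫ f = g

def ContravariantlyFinite (S : Set B) : Prop :=
  ∀ A : B, ∃ (X : B) (f : X ⟶ A), IsRightApprox S f

/-- `f : A ⟶ X` is a left `S`-approximation of `A`. -/
def IsLeftApprox (S : Set B) {A X : B} (f : A ⟶ X) : Prop :=
  X ∈ S ∧ ∀ ⦃X' : B⦄, X' ∈ S → ∀ g : A ⟶ X', ∃ h : X ⟶ X', f ≫ h = g

def CovariantlyFinite (S : Set B) : Prop :=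
  ∀ A : B, ∃ (X : B) (f : A ⟶ X), IsLeftApprox S f

/-- `(U, V)` is a cotorsion pair. -/
structure CotorsionPair (U V : Set B) : Prop where
  summands_left : ClosedUnderSummands U
  summands_right : ClosedUnderSummands V
  ext : ∀ ⦃X⦄, X ∈ U → ∀ ⦃Y⦄, Y ∈ V → Ext1Zero X Y
  resol : ∀ X : B, ∃ (VX UX : B) (i : VX ⟶ UX) (p : UX ⟶ X),
    VX ∈ V ∧ UX ∈ U ∧ IsSES i p
  coresol : ∀ X : B, ∃ (VX UX : B) (i : X ⟶ VX) (p : VX ⟶ UX),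
    VX ∈ V ∧ UX ∈ U ∧ IsSES i p

/-- `CoCone(S, T)`. -/
def CoCone (S T : Set B) : Set B :=
  {X | ∃ (B' B'' : B) (i : X ⟶ B') (p : B' ⟶ B''), B' ∈ S ∧ B'' ∈ T ∧ IsSES i p}

/-- `Cone(S, T)`. -/
def Cone (S T : Set B) : Set B :=
  {X | ∃ (B' B'' : B) (i : B' ⟶ B'') (p : B'' ⟶ X), B' ∈ S ∧ B'' ∈ T ∧ IsSES i p}

/-- The subcategory `𝒫` of projective objects. -/
def projSet : Set B := {P | Projective P}

/-- The subcategory `ℐ` of injective objects. -/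
def injSet : Set B := {I | Injective I}

/-- `Ω𝒞`, the (first) syzygy of `𝒞`. -/
def Syz (C : Set B) : Set B := CoCone projSet C

/-- Condition (RCP): `𝒫 ⊆ 𝒞`, `𝒞` rigid, contravariantly finite,
closed under direct summands (and a full additive subcategory). -/
structure RCP (C : Set B) : Prop where
  add : AddSubcat C
  proj_mem : ∀ ⦃P : B⦄, Projective P → P ∈ C
  rigid : Rigid C
  contra : ContravariantlyFinite C
  summands : ClosedUnderSummands C

/-- `f` factors through an object of `S`. -/
def FactorsThru (S : Set B) {X Y : B} (f : X ⟶ Y) : Prop :=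
  ∃ (Z : B) (g : X ⟶ Z) (h : Z ⟶ Y), Z ∈ S ∧ g ≫ h = f

instance fullSubcategoryCategorySet (H : Set B) :
    Category.{v} (ObjectProperty.FullSubcategory (H : ObjectProperty B)) :=
  ObjectProperty.FullSubcategory.category _

/-- The ideal of morphisms of the full subcategory on `H` factoring through an object of `S`. -/
def idealRel (H S : Set B) : HomRel (ObjectProperty.FullSubcategory (H : ObjectProperty B)) :=
  fun X Y f g => FactorsThru S (show X.obj ⟶ Y.obj from f.hom - g.hom)

/-- The ideal quotient `H/S`. -/
abbrev HeartCat (H S : Set B) := CategoryTheory.Quotient (idealRel H S)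

/-- The quotient functor `H → H/S`. -/
abbrev heartQ (H S : Set B) : ObjectProperty.FullSubcategory (H : ObjectProperty B) ⥤ HeartCat H S :=
  CategoryTheory.Quotient.functor _

/-- The zero morphism in the ideal quotient `H/S`. -/
def heartZero (H S : Set B) (X Y : HeartCat H S) : X ⟶ Y :=
  (heartQ H S).map (⟨0⟩ : X.as ⟶ Y.as)

/-- `κ` is a kernel of `φ` in the ideal quotient `H/S`. -/
structure IsKernelArrow {H S : Set B} {K X Y : HeartCat H S}
    (κ : K ⟶ X) (φ : X ⟶ Y) : Prop where
  w : κ ≫ φ = heartZero H S K Y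
  lift : ∀ ⦃T : HeartCat H S⦄ (t : T ⟶ X), t ≫ φ = heartZero H S T Y →
    ∃! u : T ⟶ K, u ≫ κ = t

/-- `π` is a cokernel of `φ` in the ideal quotient `H/S`. -/
structure IsCokernelArrow {H S : Set B} {X Y Q : HeartCat H S}
    (φ : X ⟶ Y) (π : Y ⟶ Q) : Prop where
  w : φ ≫ π = heartZero H S X Q
  desc : ∀ ⦃T : HeartCat H S⦄ (t : Y ⟶ T), φ ≫ t = heartZero H S X T →
    ∃! u : Q ⟶ T, π ≫ u = t

/-- The class of epimorphisms in `H/S` whose kernel object lies in `A`. -/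
def epiClassWithKernelIn (H S A : Set B) : MorphismProperty (HeartCat H S) :=
  fun X Y φ => Epi φ ∧ ∃ (K : HeartCat H S) (κ : K ⟶ X),
    K.as.obj ∈ A ∧ IsKernelArrow κ φ

/-- The class of monomorphisms in `H/S` whose cokernel object lies in `A`. -/
def monoClassWithCokernelIn (H S A : Set B) : MorphismProperty (HeartCat H S) :=
  fun X Y φ => Mono φ ∧ ∃ (Q : HeartCat H S) (π : Y ⟶ Q),
    Q.as.obj ∈ A ∧ IsCokernelArrow φ π

/-- The diagram `(⋄)` associated with a morphism `f : Y ⟶ X`. -/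
structure DiamondDiagram {Y X : B} (f : Y ⟶ X) {OmX PX Z₁ IY SgY Z₂ : B}
    (q : OmX ⟶ PX) (p : PX ⟶ X) (j : OmX ⟶ Z₁) (g : Z₁ ⟶ Y)
    (i : Y ⟶ IY) (c : IY ⟶ SgY) (h : X ⟶ Z₂) (e : Z₂ ⟶ SgY)
    (u : Z₁ ⟶ PX) (v : IY ⟶ Z₂) : Prop where
  projPX : Projective PX
  injIY : Injective IY
  ses_proj : IsSES q p
  ses_pullback : IsSES j g
  ses_inj : IsSES i c
  ses_pushout : IsSES h e
  comm₁ : j ≫ u = q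
  comm₂ : u ≫ p = g ≫ f
  comm₃ : f ≫ h = i ≫ v
  comm₄ : v ≫ e = c

/-- The class of morphisms `f : Y ⟶ X` admitting a diagram `(⋄)` with
`Z₁ ∈ ZCond` and `h` factoring through an object of `HCond`. -/
def Rclass (ZCond HCond : Set B) : MorphismProperty B :=
  fun Y X f => ∃ (OmX PX Z₁ IY SgY Z₂ : B) (q : OmX ⟶ PX) (p : PX ⟶ X)
    (j : OmX ⟶ Z₁) (g : Z₁ ⟶ Y) (i : Y ⟶ IY) (c : IY ⟶ SgY)
    (h : X ⟶ Z₂) (e : Z₂ ⟶ SgY) (u : Z₁ ⟶ PX) (v : IY ⟶ Z₂),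
    DiamondDiagram f q p j g i c h e u v ∧ Z₁ ∈ ZCond ∧ FactorsThru HCond h

/-- The class of morphisms `f : Y ⟶ X` admitting a diagram `(⋄)` with
`g` factoring through an object of `GCond` and `h` through an object of `HCond`. -/
def RtildeClass (GCond HCond : Set B) : MorphismProperty B :=
  fun Y X f => ∃ (OmX PX Z₁ IY SgY Z₂ : B) (q : OmX ⟶ PX) (p : PX ⟶ X)
    (j : OmX ⟶ Z₁) (g : Z₁ ⟶ Y) (i : Y ⟶ IY) (c : IY ⟶ SgY)
    (h : X ⟶ Z₂) (e : Z₂ ⟶ SgY) (u : Z₁ ⟶ PX) (v : IY ⟶ Z₂),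
    DiamondDiagram f q p j g i c h e u v ∧ FactorsThru GCond g ∧ FactorsThru HCond h

/-- The objects of the heart `ℋ` of a cotorsion pair `(U, V)`. -/
def HeartObjects (U V : Set B) : Set B :=
  {X | (∃ (VX UX : B) (i : VX ⟶ UX) (p : UX ⟶ X),
          IsSES i p ∧ VX ∈ V ∧ UX ∈ U ∩ V) ∧
       (∃ (VX UX : B) (i : X ⟶ VX) (p : VX ⟶ UX),
          IsSES i p ∧ VX ∈ U ∩ V ∧ UX ∈ U)}


section Helpers

open Preadditive

variable {B : Type u} [Category.{v} B] [Abelian B]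

lemma isSES_of_kernel {X A Q : B} {f : X ⟶ A} {g : A ⟶ Q} (w : f ≫ g = 0)
    [Mono f] [Epi g] (h : IsLimit (KernelFork.ofι f w)) : IsSES f g :=
  ⟨w, ShortComplex.ShortExact.mk' ((ShortComplex.mk f g w).exact_of_f_is_kernel h)
    inferInstance inferInstance⟩

lemma isSES_of_cokernel {X A Q : B} {f : X ⟶ A} {g : A ⟶ Q} (w : f ≫ g = 0)
    [Mono f] [Epi g] (h : IsColimit (CokernelCofork.ofπ g w)) : IsSES f g :=
  ⟨w, ShortComplex.ShortExact.mk' ((ShortComplex.mk f g w).exact_of_g_is_cokernel h)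
    inferInstance inferInstance⟩

/-- Pulling back a short exact sequence `0 → X → A → Q → 0` along `u : U ⟶ Q`. -/
lemma pullback_SES {X A Q U V : B} {f : X ⟶ A} {g : A ⟶ Q} (hfg : IsSES f g)
    {u : U ⟶ Q} {p₁ : V ⟶ A} {p₂ : V ⟶ U} (sq : IsPullback p₁ p₂ g u) :
    ∃ x : X ⟶ V, x ≫ p₁ = f ∧ IsSES x p₂ := by
  obtain ⟨w, hse⟩ := hfg
  haveI : Mono f := hse.mono_f
  haveI : Epi g := hse.epi_g
  have hw : f ≫ g = (0 : X ⟶ U) ≫ u := by rw [w, zero_comp]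
  refine ⟨sq.lift f 0 hw, sq.lift_fst .., ?_⟩
  set x : X ⟶ V := sq.lift f 0 hw with hxdef
  have hx₁ : x ≫ p₁ = f := sq.lift_fst ..
  have hx₂ : x ≫ p₂ = 0 := sq.lift_snd ..
  haveI : Mono x := by
    haveI : Mono (x ≫ p₁) := by rw [hx₁]; infer_instance
    exact mono_of_mono x p₁
  haveI : Epi p₂ := by
    rw [← sq.isoPullback_hom_snd]
    exact epi_comp _ _
  refine isSES_of_kernel hx₂ (KernelFork.IsLimit.ofι' _ hx₂ (fun {T} t ht => ?_))
  have h1 : (t ≫ p₁) ≫ g = 0 := by rw [assoc, sq.w, ← assoc, ht, zero_comp]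
  obtain ⟨l, hl⟩ := KernelFork.IsLimit.lift' hse.fIsKernel (t ≫ p₁) h1
  simp only [Fork.ι_ofι] at hl
  refine ⟨l, sq.hom_ext ?_ ?_⟩
  · rw [assoc, hx₁, hl]
  · rw [assoc, hx₂, comp_zero, ht]

/-- Pushing out a short exact sequence `0 → X → A → Q → 0` along `u : X ⟶ Y`. -/
lemma pushout_SES {X A Q Y P : B} {f : X ⟶ A} {g : A ⟶ Q} (hfg : IsSES f g)
    {u : X ⟶ Y} {i₁ : A ⟶ P} {i₂ : Y ⟶ P} (sq : IsPushout f u i₁ i₂) :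
    ∃ e : P ⟶ Q, i₁ ≫ e = g ∧ IsSES i₂ e := by
  obtain ⟨w, hse⟩ := hfg
  haveI : Mono f := hse.mono_f
  haveI : Epi g := hse.epi_g
  have hw : f ≫ g = u ≫ (0 : Y ⟶ Q) := by rw [w, comp_zero]
  refine ⟨sq.desc g 0 hw, sq.inl_desc .., ?_⟩
  set e : P ⟶ Q := sq.desc g 0 hw with hedef
  have he₁ : i₁ ≫ e = g := sq.inl_desc ..
  have he₂ : i₂ ≫ e = 0 := sq.inr_desc ..
  haveI : Epi e := by
    haveI : Epi (i₁ ≫ e) := by rw [he₁]; infer_instance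
    exact epi_of_epi i₁ e
  haveI : Mono i₂ := by
    rw [← sq.inr_isoPushout_inv]
    exact mono_comp _ _
  refine isSES_of_cokernel he₂ (CokernelCofork.IsColimit.ofπ' _ he₂ (fun {T} t ht => ?_))
  have h1 : f ≫ (i₁ ≫ t) = 0 := by rw [← assoc, sq.w, assoc, ht, comp_zero]
  obtain ⟨l, hl⟩ := CokernelCofork.IsColimit.desc' hse.gIsCokernel (i₁ ≫ t) h1
  simp only [Cofork.π_ofπ] at hl
  refine ⟨l, sq.hom_ext ?_ ?_⟩
  · rw [← assoc, he₁, hl]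
  · rw [← assoc, he₂, zero_comp, ht]

/-- If `0 → X → Y → Q → 0` is exact and `b : Y ⟶ Z` is mono, then the pushout of the
epi `Y → Q` along `b` yields a short exact sequence `0 → X → Z → P → 0`. -/
lemma pushout_SES_kernel {X Y Q Z P : B} {x : X ⟶ Y} {a : Y ⟶ Q} (hxa : IsSES x a)
    {b : Y ⟶ Z} [Mono b] {i₁ : Q ⟶ P} {i₂ : Z ⟶ P} (sq : IsPushout a b i₁ i₂) :
    IsSES (x ≫ b) i₂ := by
  obtain ⟨w, hse⟩ := hxa
  haveI : Mono x := hse.mono_f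
  haveI : Epi a := hse.epi_g
  have w' : (x ≫ b) ≫ i₂ = 0 := by rw [assoc, ← sq.w, ← assoc, w, zero_comp]
  haveI : Mono (x ≫ b) := mono_comp _ _
  haveI : Epi i₂ := by
    rw [← sq.inr_isoPushout_inv]
    exact epi_comp _ _
  set β : Y ⟶ Q ⊞ Z := biprod.lift a (-b) with hβdef
  have hβ : β = a ≫ biprod.inl - b ≫ biprod.inr := by
    apply biprod.hom_ext <;> simp [hβdef]
  set π : Q ⊞ Z ⟶ P := biprod.desc i₁ i₂ with hπdef
  have cond : β ≫ π = 0 := by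
    rw [hβdef, hπdef, biprod.lift_desc, neg_comp, sq.w, add_neg_cancel]
  have hcolim : IsColimit (CokernelCofork.ofπ π cond) := by
    refine CokernelCofork.IsColimit.ofπ _ _
      (fun {T} v hv => sq.desc (biprod.inl ≫ v) (biprod.inr ≫ v) ?_)
      (fun {T} v hv => ?_) (fun {T} v hv m hm => ?_)
    · rw [hβ, sub_comp, assoc, assoc, sub_eq_zero] at hv
      exact hv
    · apply biprod.hom_ext'
      · rw [hπdef, biprod.inl_desc_assoc, sq.inl_desc]
      · rw [hπdef, biprod.inr_desc_assoc, sq.inr_desc]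
    · apply sq.hom_ext
      · rw [sq.inl_desc]
        have : i₁ = biprod.inl ≫ π := by rw [hπdef, biprod.inl_desc]
        rw [this, assoc, hm]
      · rw [sq.inr_desc]
        have : i₂ = biprod.inr ≫ π := by rw [hπdef, biprod.inr_desc]
        rw [this, assoc, hm]
  haveI : Mono β := by
    constructor
    intro T p q hpq
    rw [← cancel_mono b]
    have h2 := hpq =≫ biprod.snd
    simp only [assoc, hβdef, biprod.lift_snd, comp_neg, neg_inj] at h2
    exact h2
  have hker := Abelian.monoIsKernelOfCokernel _ hcolim
  refine isSES_of_kernel w' (KernelFork.IsLimit.ofι' _ w' (fun {T} t ht => ?_))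
  have hu2 : (t ≫ biprod.inr) ≫ π = 0 := by rw [assoc, hπdef, biprod.inr_desc, ht]
  obtain ⟨l, hl⟩ := KernelFork.IsLimit.lift' hker _ hu2
  simp only [Fork.ι_ofι] at hl
  have hla : l ≫ a = 0 := by
    have h2 := hl =≫ biprod.fst
    simpa [hβdef] using h2
  have hlb : l ≫ b = -t := by
    have h2 := hl =≫ biprod.snd
    simp only [assoc, hβdef, biprod.lift_snd, comp_neg, biprod.inr_snd, comp_id] at h2
    rw [← h2, neg_neg]
  obtain ⟨m, hm⟩ := KernelFork.IsLimit.lift' hse.fIsKernel l hla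
  simp only [Fork.ι_ofι] at hm
  refine ⟨-m, ?_⟩
  rw [neg_comp, ← assoc]
  erw [hm]
  rw [hlb, neg_neg]

/-- For an epi `g : A ⟶ Q` and any `u : U ⟶ Q`, the pullback sits in a short exact
sequence `0 → pullback g u → A ⊞ U → Q → 0`. -/
lemma pullback_to_biprod_SES {A U Q : B} (g : A ⟶ Q) (u : U ⟶ Q) [Epi g] :
    ∃ (ξ : pullback g u ⟶ A ⊞ U) (γ : A ⊞ U ⟶ Q), IsSES ξ γ := by
  set ξ := Abelian.PullbackToBiproductIsKernel.pullbackToBiproduct g u with hξ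
  set γ : A ⊞ U ⟶ Q := biprod.desc g (-u) with hγ
  have w : ξ ≫ γ = 0 := by
    rw [hξ, hγ, biprod.lift_desc, comp_neg, pullback.condition, add_neg_cancel]
  have hlim : IsLimit (KernelFork.ofι ξ w) :=
    Abelian.PullbackToBiproductIsKernel.isLimitPullbackToBiproduct g u
  haveI : Mono ξ := mono_of_isLimit_fork hlim
  haveI : Epi γ := by
    haveI : Epi (biprod.inl ≫ γ) := by rw [hγ, biprod.inl_desc]; infer_instance
    exact epi_of_epi biprod.inl γ
  exact ⟨ξ, γ, isSES_of_kernel w hlim⟩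

lemma isSES_kernel_ι {U Q : B} (f : U ⟶ Q) [Epi f] : IsSES (kernel.ι f) f :=
  isSES_of_kernel (kernel.condition f) (kernelIsKernel f)

lemma isSES_id_zero (X : B) : IsSES (𝟙 X) (0 : X ⟶ (0 : B)) := by
  have w : 𝟙 X ≫ (0 : X ⟶ (0 : B)) = 0 := by simp
  haveI : Epi (0 : X ⟶ (0 : B)) := ⟨fun {T} p q _ => (isZero_zero B).eq_of_src p q⟩
  exact isSES_of_kernel w
    (KernelFork.IsLimit.ofι' _ w (fun {T} t _ => ⟨t, comp_id t⟩))

/-- If a short exact sequence has a section, its middle term lies in any additive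
subcategory containing the two ends. -/
lemma mem_of_SES_section {S : Set B} (hS : AddSubcat S) {X A Q : B} {f : X ⟶ A} {g : A ⟶ Q}
    (h : IsSES f g) {s : Q ⟶ A} (hs : s ≫ g = 𝟙 Q) (hX : X ∈ S) (hQ : Q ∈ S) : A ∈ S := by
  obtain ⟨w, hse⟩ := h
  have sp := ShortComplex.Splitting.ofExactOfSection _ hse.exact s hs hse.mono_f
  exact hS.iso_closed sp.isoBinaryBiproduct.symm (hS.sum_closed hX hQ)

lemma retraction_of_section {X A Q : B} {f : X ⟶ A} {g : A ⟶ Q}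
    (h : IsSES f g) {s : Q ⟶ A} (hs : s ≫ g = 𝟙 Q) : ∃ r : A ⟶ X, f ≫ r = 𝟙 X := by
  obtain ⟨w, hse⟩ := h
  exact ⟨(ShortComplex.Splitting.ofExactOfSection _ hse.exact s hs hse.mono_f).r,
    (ShortComplex.Splitting.ofExactOfSection _ hse.exact s hs hse.mono_f).f_r⟩

/-- `{Y | Ext1Zero T Y}` is closed under extensions. -/
lemma ext1Zero_extension {T K V Q : B} {k : K ⟶ V} {q : V ⟶ Q} (hkq : IsSES k q)
    (hK : Ext1Zero T K) (hQ : Ext1Zero T Q) : Ext1Zero T V := by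
  intro E a b hab
  haveI : Mono a := by obtain ⟨w, hse⟩ := hab; exact hse.mono_f
  have sq : IsPushout q a (pushout.inl q a) (pushout.inr q a) := IsPushout.of_hasPushout _ _
  obtain ⟨e, he₁, he⟩ := pushout_SES hab sq.flip
  obtain ⟨s, hs⟩ := hQ _ _ he
  have hses3 : IsSES (k ≫ a) (pushout.inr q a) := pushout_SES_kernel hkq sq
  have sqW : IsPullback (pullback.fst (pushout.inr q a) s) (pullback.snd (pushout.inr q a) s)
      (pushout.inr q a) s := IsPullback.of_hasPullback _ _
  obtain ⟨κ, hκ₁, hκ⟩ := pullback_SES hses3 sqW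
  obtain ⟨t, ht⟩ := hK _ _ hκ
  refine ⟨t ≫ pullback.fst (pushout.inr q a) s, ?_⟩
  have hb : pushout.inr q a ≫ e = b := he₁
  calc (t ≫ pullback.fst (pushout.inr q a) s) ≫ b
      = t ≫ (pullback.fst (pushout.inr q a) s ≫ pushout.inr q a) ≫ e := by
        rw [← hb]; simp only [assoc]
    _ = t ≫ (pullback.snd (pushout.inr q a) s ≫ s) ≫ e := by rw [pullback.condition]
    _ = (t ≫ pullback.snd (pushout.inr q a) s) ≫ (s ≫ e) := by simp only [assoc]
    _ = 𝟙 T := by rw [ht, hs, id_comp]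

/-- Wakamatsu's lemma: the kernel of an epi right `D`-approximation lies in `D^⊥¹`. -/
lemma wakamatsu_kernel {D : Set B} (hrig : Rigid D) {U Q : B} (hU : U ∈ D)
    {f : U ⟶ Q} [Epi f]
    (happ : ∀ ⦃X' : B⦄, X' ∈ D → ∀ g : X' ⟶ Q, ∃ h : X' ⟶ U, h ≫ f = g)
    {D' : B} (hD' : D' ∈ D) : Ext1Zero D' (kernel f) := by
  intro E e₁ e₂ hE
  have sq : IsPushout (kernel.ι f) e₁ (pushout.inl (kernel.ι f) e₁)
      (pushout.inr (kernel.ι f) e₁) := IsPushout.of_hasPushout _ _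
  obtain ⟨d, hd₁, hd⟩ := pushout_SES hE sq.flip
  obtain ⟨c, hc₁, hc⟩ := pushout_SES (isSES_kernel_ι f) sq
  obtain ⟨s, hs⟩ := hrig hD' hU _ _ hd
  obtain ⟨h, hh⟩ := happ hD' (s ≫ c)
  have hσc : (s - h ≫ pushout.inl (kernel.ι f) e₁) ≫ c = 0 := by
    rw [sub_comp, assoc, hc₁, hh, sub_self]
  obtain ⟨wc, hcse⟩ := hc
  obtain ⟨τ, hτ⟩ := KernelFork.IsLimit.lift' hcse.fIsKernel _ hσc
  simp only [Fork.ι_ofι] at hτ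
  refine ⟨τ, ?_⟩
  obtain ⟨wd, _⟩ := hd
  have : τ ≫ e₂ = τ ≫ pushout.inr (kernel.ι f) e₁ ≫ d := by rw [hd₁]
  rw [this, ← assoc]
  erw [hτ]
  rw [sub_comp, assoc, wd, comp_zero, sub_zero, hs]

end Helpers

/-- `CoCone(𝒟,𝒞) = CoCone(𝒞',𝒟)` iff `𝒞' = CoCone(𝒟,𝒞) ∩ 𝒟^⊥¹`. -/
theorem statement_15 {B : Type u} [Category.{v} B] [Abelian B]
    [EnoughProjectives B] [EnoughInjectives B]
    (C C' D : Set B) (hC : RCP C) (hC' : RCP C') (hD : RCP D)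
    (hDCC' : D ⊆ C ∩ C') :
    CoCone D C = CoCone C' D ↔ C' = CoCone D C ∩ rightPerp D := by
  constructor
  · -- Assume `CoCone D C = CoCone C' D`, show `C' = CoCone D C ∩ D^⊥¹`.
    intro hEq
    apply Set.Subset.antisymm
    · intro Y hY
      constructor
      · rw [hEq]
        exact ⟨Y, 0, 𝟙 Y, 0, hY, hD.add.zero_mem, isSES_id_zero Y⟩
      · intro D' hD'
        exact hC'.rigid (hDCC' hD').2 hY
    · rintro Y ⟨hY1, hY2⟩
      rw [hEq] at hY1
      obtain ⟨Z, D'', i, p, hZ, hD'', hses⟩ := hY1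
      obtain ⟨s, hs⟩ := hY2 hD'' i p hses
      obtain ⟨r, hr⟩ := retraction_of_section hses hs
      exact hC'.summands r i hr hZ
  · -- Assume `C' = CoCone D C ∩ D^⊥¹`, show `CoCone D C = CoCone C' D`.
    intro hEq
    apply Set.Subset.antisymm
    · -- `CoCone D C ⊆ CoCone C' D`.
      intro X hX
      obtain ⟨D₀, C₀, x, g, hD₀, hC₀, hxg⟩ := hX
      obtain ⟨U, f, hUD, happ⟩ := hD.contra C₀
      haveI : Epi f := by
        obtain ⟨h, hh⟩ := happ (hD.proj_mem (Projective.projective_over C₀)) (Projective.π C₀)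
        haveI : Epi (h ≫ f) := by rw [hh]; infer_instance
        exact epi_of_epi h f
      haveI : Epi g := by obtain ⟨w, hse⟩ := hxg; exact hse.epi_g
      have sq : IsPullback (pullback.fst g f) (pullback.snd g f) g f :=
        IsPullback.of_hasPullback g f
      obtain ⟨x', hx'₁, hx'⟩ := pullback_SES hxg sq
      obtain ⟨κ, hκ₁, hκ⟩ := pullback_SES (isSES_kernel_ι f) sq.flip
      have hVperp : pullback g f ∈ rightPerp D := by
        intro D' hD'
        exact ext1Zero_extension hκ (wakamatsu_kernel hD.rigid hUD happ hD')
          (hD.rigid hD' hD₀)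
      have hVco : pullback g f ∈ CoCone D C := by
        obtain ⟨ξ, γ, hsesV⟩ := pullback_to_biprod_SES g f
        exact ⟨D₀ ⊞ U, C₀, ξ, γ, hD.add.sum_closed hD₀ hUD, hC₀, hsesV⟩
      have hV : pullback g f ∈ C' := by rw [hEq]; exact ⟨hVco, hVperp⟩
      exact ⟨pullback g f, U, x', pullback.snd g f, hV, hUD, hx'⟩
    · -- `CoCone C' D ⊆ CoCone D C`.
      intro X hX
      obtain ⟨Y, D₀, x, a, hY, hD₀, hxa⟩ := hX
      rw [hEq] at hY
      obtain ⟨hYco, -⟩ := hY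
      obtain ⟨D₁, C₁, b, c, hD₁, hC₁, hbc⟩ := hYco
      haveI : Mono b := by obtain ⟨w, hse⟩ := hbc; exact hse.mono_f
      have sq : IsPushout a b (pushout.inl a b) (pushout.inr a b) :=
        IsPushout.of_hasPushout a b
      obtain ⟨e, he₁, he⟩ := pushout_SES hbc sq.flip
      obtain ⟨s, hs⟩ := hC.rigid hC₁ (hDCC' hD₀).1 _ _ he
      have hPC : pushout a b ∈ C :=
        mem_of_SES_section hC.add he hs (hDCC' hD₀).1 hC₁
      exact ⟨D₁, pushout a b, x ≫ b, pushout.inr a b, hD₁, hPC,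
        pushout_SES_kernel hxa sq⟩

end CotorsionPaper
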